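/- For arbitrary quadratic binary forms U, V, W over a field of characteristic zero, (U, V·W)_2 = (1/2)·(U,V)_2·W + (1/2)·(U,W)_2·V − (1/3)·(V,W)_2·U. -/
import Mathlib


open MvPolynomial

/-- The `r`-th transvectant of binary forms `G`, `H` of degrees `m`, `n`:
`(G,H)_r = ((m−r)!(n−r)!)/(m!·n!) · Σ_{i=0}^{r} (−1)^i·C(r,i)·
  (∂^r G/∂x1^{r−i}∂x2^{i})·(∂^r H/∂x1^{i}∂x2^{r−i})`. -/
noncomputable def transvectant {k : Type*} [Field k] (m n r : ℕ)
    (G H : MvPolynomial (Fin 2) k) : MvPolynomial (Fin 2) k :=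
  C ((((m - r).factorial * (n - r).factorial : ℕ) : k) /
      ((m.factorial * n.factorial : ℕ) : k)) *
    ∑ i ∈ Finset.range (r + 1),
      C ((-1 : k) ^ i * (r.choose i : k)) *
        ((fun p => pderiv (0 : Fin 2) p)^[r - i]
            ((fun p => pderiv (1 : Fin 2) p)^[i] G) *
          (fun p => pderiv (0 : Fin 2) p)^[i]
            ((fun p => pderiv (1 : Fin 2) p)^[r - i] H))

lemma fs_eq (a b c e : ℕ) :
    (Finsupp.single (0:Fin 2) a + Finsupp.single 1 b =
      Finsupp.single 0 c + Finsupp.single 1 e) ↔ (a = c ∧ b = e) := by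
  constructor
  · intro h
    constructor
    · have := DFunLike.congr_fun h 0; simpa using this
    · have := DFunLike.congr_fun h 1; simpa using this
  · rintro ⟨rfl, rfl⟩; rfl

lemma quad_decomp {k : Type*} [Field k] (P : MvPolynomial (Fin 2) k)
    (hP : P.IsHomogeneous 2) :
    P = C (coeff (Finsupp.single 0 2) P) * X 0 ^ 2 +
        C (coeff (Finsupp.single 0 1 + Finsupp.single 1 1) P) * (X 0 * X 1) +
        C (coeff (Finsupp.single 1 2) P) * X 1 ^ 2 := by
  have e1 : (Finsupp.single (0:Fin 2) 2) = Finsupp.single 0 2 + Finsupp.single 1 0 := by simp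
  have e3 : (Finsupp.single (1:Fin 2) 2) = Finsupp.single 0 0 + Finsupp.single 1 2 := by simp
  have hXX : (X 0 * X 1 : MvPolynomial (Fin 2) k) =
      monomial (Finsupp.single 0 1 + Finsupp.single 1 1) 1 := by
    rw [X, X, monomial_mul]; simp
  ext d
  obtain ⟨n0, n1, rfl⟩ : ∃ n0 n1, d = Finsupp.single 0 n0 + Finsupp.single 1 n1 := by
    refine ⟨d 0, d 1, ?_⟩
    ext i; fin_cases i <;> simp
  have hdeg : (Finsupp.single (0:Fin 2) n0 + Finsupp.single 1 n1).degree = n0 + n1 := by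
    simp [Finsupp.degree_eq_weight_one, map_add, Finsupp.weight_apply,
      Finsupp.sum_single_index]
  rw [hXX, C_mul_X_pow_eq_monomial, C_mul_X_pow_eq_monomial,
    C_mul_monomial, mul_one,
    coeff_add, coeff_add, coeff_monomial, coeff_monomial, coeff_monomial]
  by_cases h : n0 + n1 = 2
  · rw [e1, e3]
    simp only [fs_eq]
    clear hXX e1 e3 hdeg
    split_ifs <;>
      first
        | (exfalso; omega)
        | (simp only [zero_add, add_zero]; congr 1; ext i; fin_cases i <;> simp <;> omega)
  · rw [hP.coeff_eq_zero (by omega), e1, e3]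
    simp only [fs_eq]
    split_ifs <;> first | (exfalso; omega) | norm_num


lemma pderiv_two {k : Type*} [Field k] (i : Fin 2) :
    pderiv i (2 : MvPolynomial (Fin 2) k) = 0 := by
  rw [show (2 : MvPolynomial (Fin 2) k) = C 2 from (map_ofNat C 2).symm]; exact pderiv_C

lemma pderiv_natCast {k : Type*} [Field k] (i : Fin 2) (n : ℕ) :
    pderiv i ((n : ℕ) : MvPolynomial (Fin 2) k) = 0 := by
  rw [show ((n : ℕ) : MvPolynomial (Fin 2) k) = C (n : k) from (map_natCast C n).symm]
  exact pderiv_C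

noncomputable def q {k : Type*} [Field k] (a b c : k) : MvPolynomial (Fin 2) k :=
  C a * X 0 ^ 2 + C b * (X 0 * X 1) + C c * X 1 ^ 2

lemma tr22 {k : Type*} [Field k] [CharZero k] (a b c d e f : k) :
    transvectant 2 2 2 (q a b c) (q d e f) =
      C (1/4 : k) * C (4*(a*f) - 2*(b*e) + 4*(c*d)) := by
  simp only [transvectant, q, Finset.sum_range_succ, Finset.sum_range_zero,
    show (2-0 : ℕ) = 2 from rfl, show (2-1 : ℕ) = 1 from rfl, show (2-2:ℕ) = 0 from rfl,
    show ∀ (g : MvPolynomial (Fin 2) k → MvPolynomial (Fin 2) k) x, g^[2] x = g (g x) from fun _ _ => rfl,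
    Function.iterate_one, Function.iterate_zero, id]
  simp only [map_add, pderiv_C_mul, pderiv_mul, pderiv_pow, pderiv_X_self,
    pderiv_X_of_ne (show (1:Fin 2) ≠ 0 by decide), pderiv_X_of_ne (show (0:Fin 2) ≠ 1 by decide),
    pderiv_C, pderiv_two]
  norm_num [Nat.factorial]
  simp only [show (2 : MvPolynomial (Fin 2) k) = C (2:k) from (map_ofNat C 2).symm,
    pderiv_C, zero_mul, mul_zero, zero_add, add_zero,
    ← C_mul, ← C_add, ← C_sub, ← C_neg, ← C_1]
  rw [MvPolynomial.C_inj]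
  ring

set_option maxHeartbeats 4000000 in
lemma key {k : Type*} [Field k] [CharZero k] (a b c d e f g h i : k) :
    transvectant 2 4 2 (q a b c) (q d e f * q g h i) =
      C (1 / 2 : k) * transvectant 2 2 2 (q a b c) (q d e f) * q g h i +
        C (1 / 2 : k) * transvectant 2 2 2 (q a b c) (q g h i) * q d e f -
          C (1 / 3 : k) * transvectant 2 2 2 (q d e f) (q g h i) * q a b c := by
  have h24 : (C (24:k) : MvPolynomial (Fin 2) k) ≠ 0 := by
    simpa using (by norm_num : (24:k) ≠ 0)
  apply mul_left_cancel₀ h24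
  rw [tr22, tr22, tr22]
  have m1 : C (24:k) * C ((((2-2).factorial * (4-2).factorial : ℕ) : k) /
      (((2).factorial * (4).factorial : ℕ) : k)) = (1 : MvPolynomial (Fin 2) k) := by
    rw [← C_mul]; norm_num [Nat.factorial]
  have m2 : C (24:k) * (C (1/2 : k) * C (1/4 : k)) = (C (3:k) : MvPolynomial (Fin 2) k) := by
    rw [← C_mul, ← C_mul]; norm_num
  have m3 : C (24:k) * (C (1/3 : k) * C (1/4 : k)) = (C (2:k) : MvPolynomial (Fin 2) k) := by
    rw [← C_mul, ← C_mul]; norm_num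
  calc C (24:k) * transvectant 2 4 2 (q a b c) (q d e f * q g h i)
      = (C (24:k) * C ((((2-2).factorial * (4-2).factorial : ℕ) : k) /
          (((2).factorial * (4).factorial : ℕ) : k))) *
        ∑ j ∈ Finset.range 3,
          C ((-1 : k) ^ j * ((2).choose j : k)) *
            ((fun p => pderiv (0 : Fin 2) p)^[2 - j]
                ((fun p => pderiv (1 : Fin 2) p)^[j] (q a b c)) *
              (fun p => pderiv (0 : Fin 2) p)^[j]
                ((fun p => pderiv (1 : Fin 2) p)^[2 - j] (q d e f * q g h i))) := by
        rw [transvectant]; ring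
    _ = C (3:k) * C (4*(a*f) - 2*(b*e) + 4*(c*d)) * q g h i +
        C (3:k) * C (4*(a*i) - 2*(b*h) + 4*(c*g)) * q d e f -
        C (2:k) * C (4*(d*i) - 2*(e*h) + 4*(f*g)) * q a b c := by
        rw [m1, one_mul]
        simp only [Finset.sum_range_succ, Finset.sum_range_zero,
          show (2-0 : ℕ) = 2 from rfl, show (2-1 : ℕ) = 1 from rfl, show (2-2:ℕ) = 0 from rfl,
          show ∀ (g : MvPolynomial (Fin 2) k → MvPolynomial (Fin 2) k) x, g^[2] x = g (g x) from fun _ _ => rfl,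
          Function.iterate_one, Function.iterate_zero, id, q]
        simp only [map_add, pderiv_C_mul, pderiv_mul, pderiv_pow, pderiv_X_self,
          pderiv_X_of_ne (show (1:Fin 2) ≠ 0 by decide),
          pderiv_X_of_ne (show (0:Fin 2) ≠ 1 by decide),
          pderiv_C, pderiv_two, pderiv_natCast]
        norm_num
        simp only [map_sub, C_add, C_mul, map_ofNat]
        ring
    _ = C (24:k) * (C (1 / 2 : k) * (C (1/4 : k) * C (4*(a*f) - 2*(b*e) + 4*(c*d))) * q g h i +
          C (1 / 2 : k) * (C (1/4 : k) * C (4*(a*i) - 2*(b*h) + 4*(c*g))) * q d e f -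
          C (1 / 3 : k) * (C (1/4 : k) * C (4*(d*i) - 2*(e*h) + 4*(f*g))) * q a b c) := by
        rw [mul_sub, mul_add]
        rw [show C (24:k) * (C (1 / 2 : k) * (C (1/4 : k) * C (4*(a*f) - 2*(b*e) + 4*(c*d))) * q g h i)
            = (C (24:k) * (C (1/2:k) * C (1/4:k))) * C (4*(a*f) - 2*(b*e) + 4*(c*d)) * q g h i by ring,
          show C (24:k) * (C (1 / 2 : k) * (C (1/4 : k) * C (4*(a*i) - 2*(b*h) + 4*(c*g))) * q d e f)
            = (C (24:k) * (C (1/2:k) * C (1/4:k))) * C (4*(a*i) - 2*(b*h) + 4*(c*g)) * q d e f by ring,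
          show C (24:k) * (C (1 / 3 : k) * (C (1/4 : k) * C (4*(d*i) - 2*(e*h) + 4*(f*g))) * q a b c)
            = (C (24:k) * (C (1/3:k) * C (1/4:k))) * C (4*(d*i) - 2*(e*h) + 4*(f*g)) * q a b c by ring,
          m2, m3]

/-- For arbitrary quadratic binary forms `U, V, W` over a field of characteristic zero,
`(U,V·W)_2 = (1/2)·(U,V)_2·W + (1/2)·(U,W)_2·V − (1/3)·(V,W)_2·U`. -/
theorem pascal_stmt_12 {k : Type*} [Field k] [CharZero k]
    (U V W : MvPolynomial (Fin 2) k)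
    (hU : U.IsHomogeneous 2) (hV : V.IsHomogeneous 2) (hW : W.IsHomogeneous 2) :
    transvectant 2 4 2 U (V * W) =
      C (1 / 2 : k) * transvectant 2 2 2 U V * W +
        C (1 / 2 : k) * transvectant 2 2 2 U W * V -
          C (1 / 3 : k) * transvectant 2 2 2 V W * U := by
  rw [quad_decomp U hU, quad_decomp V hV, quad_decomp W hW]
  exact key _ _ _ _ _ _ _ _ _
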